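/- (Corrected uniform version of Proposition 2.) Let ε > 0, ε̄ ∈ (0,1), ρ > 0, ρ̄ > 0. Let f : ℕ → ℝ with f(n) ≥ 1 and f(n) → ∞, and let b_n ∈ [0,1] with b_n → 1. For each n let k_1^n, …, k_n^n be natural numbers with k_i^n ≥ 1 such that |{i ≤ n : k_i^n ≥ f(n)}|/n ≥ b_n. Then there exists a sequence (δ_n) of nonnegative reals with δ_n → 0 such that for every n, (1/n)·∑_{i=1}^n erf(ε·√((ρ + ρ̄·k_i^n)/2)) ≥ 1 − δ_n·ε̄; that is, if asymptotically almost all agents obtain at least f(n) signals with f(n) → ∞, then δ-perfect learning occurs. -/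

import Mathlib

open Filter
open scoped Classical

/-- The error function `erf x = (2/√π) ∫₀ˣ e^{-t²} dt`. -/
noncomputable def erf (x : ℝ) : ℝ :=
  (2 / Real.sqrt Real.pi) * ∫ t in (0:ℝ)..x, Real.exp (-t ^ 2)

lemma exp_neg_sq_eq : (fun t : ℝ => Real.exp (-t ^ 2)) = fun t => Real.exp (-1 * t ^ 2) := by
  funext t; ring_nf

lemma erf_tendsto_one : Tendsto erf atTop (nhds 1) := by
  have hint : MeasureTheory.IntegrableOn (fun t : ℝ => Real.exp (-t ^ 2)) (Set.Ioi 0) := by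
    rw [exp_neg_sq_eq]
    exact (integrable_exp_neg_mul_sq one_pos).integrableOn
  have h1 : Tendsto (fun x : ℝ => ∫ t in (0:ℝ)..x, Real.exp (-t ^ 2)) atTop
      (nhds (∫ t in Set.Ioi (0:ℝ), Real.exp (-t ^ 2))) :=
    MeasureTheory.intervalIntegral_tendsto_integral_Ioi 0 hint tendsto_id
  have h2 : (∫ t in Set.Ioi (0:ℝ), Real.exp (-t ^ 2)) = Real.sqrt Real.pi / 2 := by
    rw [exp_neg_sq_eq]
    simpa using integral_gaussian_Ioi 1
  rw [h2] at h1
  have hπ : Real.sqrt Real.pi ≠ 0 := by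
    positivity
  have := h1.const_mul (2 / Real.sqrt Real.pi)
  convert this using 2
  · rfl
  · field_simp

lemma cont_exp_neg_sq : Continuous (fun t : ℝ => Real.exp (-t ^ 2)) := by
  continuity

lemma erf_mono : Monotone erf := by
  intro a c hac
  unfold erf
  have hcoef : (0:ℝ) ≤ 2 / Real.sqrt Real.pi := by positivity
  refine mul_le_mul_of_nonneg_left ?_ hcoef
  have hadd : (∫ t in (0:ℝ)..a, Real.exp (-t ^ 2)) + (∫ t in a..c, Real.exp (-t ^ 2))
      = ∫ t in (0:ℝ)..c, Real.exp (-t ^ 2) :=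
    intervalIntegral.integral_add_adjacent_intervals
      (cont_exp_neg_sq.intervalIntegrable _ _) (cont_exp_neg_sq.intervalIntegrable _ _)
  have hnn : 0 ≤ ∫ t in a..c, Real.exp (-t ^ 2) :=
    intervalIntegral.integral_nonneg hac (fun t _ => (Real.exp_pos _).le)
  linarith

lemma erf_nonneg {x : ℝ} (hx : 0 ≤ x) : 0 ≤ erf x := by
  unfold erf
  have : 0 ≤ ∫ t in (0:ℝ)..x, Real.exp (-t ^ 2) :=
    intervalIntegral.integral_nonneg hx (fun t _ => (Real.exp_pos _).le)
  positivity


/-- Corrected uniform version of Proposition 2: if asymptotically almost all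
agents obtain at least `f n` signals, where `f n → ∞` (the fraction being at
least `b n → 1`), then there exists a vanishing nonnegative sequence `δ_n`
for which the sufficient condition for `(ε, ε̄, δ_n)`-learning,
`(1/n) ∑ᵢ erf(ε√((ρ + ρ̄ kᵢⁿ)/2)) ≥ 1 - δ_n ε̄`, holds for every `n ≥ 1`;
i.e. δ-perfect learning occurs. -/
theorem stmt_13 (ε εbar ρ ρbar : ℝ) (hε : 0 < ε) (hεbar : εbar ∈ Set.Ioo (0:ℝ) 1)
    (hρ : 0 < ρ) (hρbar : 0 < ρbar)
    (f : ℕ → ℝ) (hf1 : ∀ n, 1 ≤ f n) (hftop : Tendsto f atTop atTop)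
    (b : ℕ → ℝ) (hb01 : ∀ n, b n ∈ Set.Icc (0:ℝ) 1) (hb1 : Tendsto b atTop (nhds 1))
    (k : (n : ℕ) → Fin n → ℕ) (hk : ∀ n i, 1 ≤ k n i)
    (hfrac : ∀ n : ℕ, 1 ≤ n →
      b n ≤ ((Finset.univ.filter fun i : Fin n => f n ≤ (k n i : ℝ)).card : ℝ) / n) :
    ∃ δ : ℕ → ℝ, (∀ n, 0 ≤ δ n) ∧ Tendsto δ atTop (nhds 0) ∧
      ∀ n : ℕ, 1 ≤ n →
        1 - δ n * εbar ≤
          (1 / n : ℝ) * ∑ i : Fin n, erf (ε * Real.sqrt ((ρ + ρbar * k n i) / 2)) := by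
  obtain ⟨hεbar0, hεbar1⟩ := hεbar
  set E : ℕ → ℝ := fun n => erf (ε * Real.sqrt ((ρ + ρbar * f n) / 2)) with hE
  set δ : ℕ → ℝ := fun n => max 0 ((1 - b n * E n) / εbar) with hδ
  -- the argument tends to infinity
  have harg : Tendsto (fun n => ε * Real.sqrt ((ρ + ρbar * f n) / 2)) atTop atTop := by
    apply Tendsto.const_mul_atTop hε
    have hsq : Tendsto Real.sqrt atTop atTop := by
      apply tendsto_atTop_atTop.2
      intro c
      refine ⟨(max c 0) ^ 2, fun x hx => le_trans (le_max_left c 0) ?_⟩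
      rw [← Real.sqrt_sq (le_max_right c 0)]
      exact Real.sqrt_le_sqrt hx
    apply hsq.comp
    apply Tendsto.atTop_div_const (by norm_num : (0:ℝ) < 2)
    exact tendsto_atTop_add_const_left _ ρ (hftop.const_mul_atTop hρbar)
  have hE1 : Tendsto E atTop (nhds 1) := erf_tendsto_one.comp harg
  have hbE : Tendsto (fun n => b n * E n) atTop (nhds 1) := by
    simpa using hb1.mul hE1
  have hδ0 : Tendsto δ atTop (nhds 0) := by
    have h1 : Tendsto (fun n => (1 - b n * E n) / εbar) atTop (nhds 0) := by
      have := (tendsto_const_nhds (x := (1:ℝ)) (f := atTop)).sub hbE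
      simpa using this.div_const εbar
    have := (tendsto_const_nhds (x := (0:ℝ)) (f := atTop)).max h1
    simpa using this
  refine ⟨δ, fun n => le_max_left _ _, hδ0, fun n hn => ?_⟩
  have hn' : (0:ℝ) < n := by exact_mod_cast hn
  set S := Finset.univ.filter fun i : Fin n => f n ≤ (k n i : ℝ) with hS
  have hEnn : 0 ≤ E n := erf_nonneg (by positivity)
  -- each summand is nonnegative
  have hterm_nn : ∀ i : Fin n, 0 ≤ erf (ε * Real.sqrt ((ρ + ρbar * k n i) / 2)) :=
    fun i => erf_nonneg (by positivity)
  -- for i ∈ S the summand is at least E n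
  have hterm_ge : ∀ i ∈ S, E n ≤ erf (ε * Real.sqrt ((ρ + ρbar * k n i) / 2)) := by
    intro i hi
    rw [hS, Finset.mem_filter] at hi
    apply erf_mono
    have h1 : (ρ + ρbar * f n) / 2 ≤ (ρ + ρbar * k n i) / 2 := by
      have := mul_le_mul_of_nonneg_left hi.2 hρbar.le
      linarith
    exact mul_le_mul_of_nonneg_left (Real.sqrt_le_sqrt h1) hε.le
  have hsum : (S.card : ℝ) * E n ≤
      ∑ i : Fin n, erf (ε * Real.sqrt ((ρ + ρbar * k n i) / 2)) := by
    calc (S.card : ℝ) * E n = ∑ _i ∈ S, E n := by rw [Finset.sum_const]; ring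
    _ ≤ ∑ i ∈ S, erf (ε * Real.sqrt ((ρ + ρbar * k n i) / 2)) :=
        Finset.sum_le_sum hterm_ge
    _ ≤ ∑ i : Fin n, erf (ε * Real.sqrt ((ρ + ρbar * k n i) / 2)) :=
        Finset.sum_le_sum_of_subset_of_nonneg (Finset.filter_subset _ _)
          (fun i _ _ => hterm_nn i)
  have hbound : b n * E n ≤
      (1 / n : ℝ) * ∑ i : Fin n, erf (ε * Real.sqrt ((ρ + ρbar * k n i) / 2)) := by
    have h1 : b n * E n ≤ ((S.card : ℝ) / n) * E n :=
      mul_le_mul_of_nonneg_right (hfrac n hn) hEnn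
    calc b n * E n ≤ ((S.card : ℝ) / n) * E n := h1
    _ = (1 / n : ℝ) * ((S.card : ℝ) * E n) := by ring
    _ ≤ _ := mul_le_mul_of_nonneg_left hsum (by positivity)
  have hδn : (1 - b n * E n) / εbar ≤ δ n := le_max_right _ _
  have : 1 - b n * E n ≤ δ n * εbar := by
    have := mul_le_mul_of_nonneg_right hδn hεbar0.le
    rwa [div_mul_cancel₀ _ hεbar0.ne'] at this
  linarith
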